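/- Let n be a positive natural number, t > 0 and M > 0, and write s_t = 1 - e^{-2t}. For a Borel probability measure μ on ℝⁿ, let P_t μ denote the Borel probability measure on ℝⁿ with density z ↦ ∫_{ℝⁿ} (2π s_t)^{-n/2} · exp( -‖z - e^{-t}x‖²/(2 s_t) ) dμ(x) (the Ornstein–Uhlenbeck semigroup applied to μ). Then there exists a constant S > 0, depending only on n, t and M, such that for all Borel probability measures μ and ν supported in the closed ball of radius M centered at the origin, and every coupling π of μ and ν (i.e. every Borel probability measure on ℝⁿ × ℝⁿ with first marginal μ and second marginal ν), the Kullback–Leibler divergence satisfies KL( P_t ν ‖ P_t μ ) ≤ S · ∫ ‖x - y‖ dπ(x, y). In particular KL( P_t ν ‖ P_t μ ) ≤ S · W₁(μ, ν), the infimum of ∫‖x-y‖dπ over all couplings π. -/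

import Mathlib

open MeasureTheory Real
open scoped BigOperators

set_option maxHeartbeats 1000000

noncomputable section

/-- Density at `z` of the Ornstein–Uhlenbeck semigroup `P_t μ` applied to a Borel
probability measure `μ` on `ℝⁿ`:
`z ↦ ∫ (2π s_t)^{-n/2} exp(-‖z - e^{-t}x‖²/(2 s_t)) dμ(x)`, `s_t = 1 - e^{-2t}`. -/
def ouDensity (n : ℕ) (t : ℝ) (μ : Measure (EuclideanSpace ℝ (Fin n)))
    (z : EuclideanSpace ℝ (Fin n)) : ℝ :=
  ∫ x, (2 * π * (1 - Real.exp (-2 * t))) ^ (-(n : ℝ) / 2) *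
    Real.exp (-‖z - Real.exp (-t) • x‖ ^ 2 / (2 * (1 - Real.exp (-2 * t)))) ∂μ

/-- Kullback–Leibler divergence `KL(P_t ν ‖ P_t μ)` between the evolved measures,
computed via their densities. -/
def ouKL (n : ℕ) (t : ℝ) (ν μ : Measure (EuclideanSpace ℝ (Fin n))) : ℝ :=
  ∫ z, ouDensity n t ν z * Real.log (ouDensity n t ν z / ouDensity n t μ z)

lemma exp_le_one_add_mul_exp {u U : ℝ} (hu : 0 ≤ u) (huU : u ≤ U) :
    Real.exp u ≤ 1 + u * Real.exp U := by
  have h1 : 1 - u ≤ Real.exp (-u) := by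
    have := Real.add_one_le_exp (-u); linarith
  have h2 : Real.exp (-u) * Real.exp u = 1 := by
    rw [← Real.exp_add]; simp
  have h3 : Real.exp u ≤ Real.exp U := Real.exp_le_exp.2 huU
  have h4 : 0 < Real.exp u := Real.exp_pos u
  nlinarith

lemma gauss_int (n : ℕ) {b : ℝ} (hb : 0 < b) (c : ℝ) :
    Integrable (fun z : EuclideanSpace ℝ (Fin n) => Real.exp (c * ‖z‖ - ‖z‖ ^ 2 / b)) := by
  have hbase : Integrable
      (fun z : EuclideanSpace ℝ (Fin n) => Real.exp (-(1 / (2 * b)) * ‖z‖ ^ 2)) := by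
    have h := (GaussianFourier.integrable_cexp_neg_mul_sq_norm_add_of_euclideanSpace
      (ι := Fin n) (b := ((1 / (2 * b) : ℝ) : ℂ)) (by simpa using by positivity) 0
      (0 : EuclideanSpace ℝ (Fin n))).norm
    have heq : ∀ z : EuclideanSpace ℝ (Fin n),
        ‖Complex.exp (-((1 / (2 * b) : ℝ) : ℂ) * (‖z‖ : ℂ) ^ 2 +
            0 * ((inner ℝ (0 : EuclideanSpace ℝ (Fin n)) z : ℝ) : ℂ))‖
          = Real.exp (-(1 / (2 * b)) * ‖z‖ ^ 2) := by
      intro z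
      have hc : -((1 / (2 * b) : ℝ) : ℂ) * (‖z‖ : ℂ) ^ 2 +
          0 * ((inner ℝ (0 : EuclideanSpace ℝ (Fin n)) z : ℝ) : ℂ)
          = ((-(1 / (2 * b)) * ‖z‖ ^ 2 : ℝ) : ℂ) := by push_cast; ring
      rw [Complex.norm_exp, hc, Complex.ofReal_re]
    exact h.congr (Filter.Eventually.of_forall heq)
  refine hbase.const_mul (Real.exp (c ^ 2 * b / 2)) |>.mono' ?_ ?_
  · exact (Real.continuous_exp.comp (by fun_prop)).aestronglyMeasurable
  · refine Filter.Eventually.of_forall fun z => ?_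
    rw [Real.norm_eq_abs, abs_of_pos (Real.exp_pos _), ← Real.exp_add]
    apply Real.exp_le_exp.2
    have h2 : 0 ≤ (‖z‖ - c * b) ^ 2 / (2 * b) := div_nonneg (sq_nonneg _) (by positivity)
    have h3 : (‖z‖ - c * b) ^ 2 / (2 * b) = ‖z‖ ^ 2 / (2 * b) - c * ‖z‖ + c ^ 2 * b / 2 := by
      field_simp; ring
    have h4 : ‖z‖ ^ 2 / b = ‖z‖ ^ 2 / (2 * b) + ‖z‖ ^ 2 / (2 * b) := by ring
    have h5 : (1 / (2 * b)) * ‖z‖ ^ 2 = ‖z‖ ^ 2 / (2 * b) := by ring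
    linarith

/-- entropy–cost inequality (paper's Theorem 14). For the OU semigroup
there is a constant `S > 0` (depending only on `n`, `t`, `M`) such that for all Borel
probability measures `μ, ν` supported in the closed ball of radius `M` and every
coupling `γ` of `μ` and `ν`, `KL(P_t ν ‖ P_t μ) ≤ S ∫ ‖x - y‖ dγ`; in particular
`KL(P_t ν ‖ P_t μ) ≤ S · W₁(μ, ν)`. -/
theorem ou_entropy_cost_inequality
    (n : ℕ) (hn : 0 < n) (t M : ℝ) (ht : 0 < t) (hM : 0 < M) :
    ∃ S : ℝ, 0 < S ∧
      ∀ μ ν : Measure (EuclideanSpace ℝ (Fin n)),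
        IsProbabilityMeasure μ → IsProbabilityMeasure ν →
        μ (Metric.closedBall (0 : EuclideanSpace ℝ (Fin n)) M)ᶜ = 0 →
        ν (Metric.closedBall (0 : EuclideanSpace ℝ (Fin n)) M)ᶜ = 0 →
        (∀ γ : Measure (EuclideanSpace ℝ (Fin n) × EuclideanSpace ℝ (Fin n)),
          IsProbabilityMeasure γ → γ.map Prod.fst = μ → γ.map Prod.snd = ν →
            ouKL n t ν μ ≤ S * ∫ p, ‖p.1 - p.2‖ ∂γ) ∧
        ouKL n t ν μ ≤ S * sInf {c : ℝ |
          ∃ γ : Measure (EuclideanSpace ℝ (Fin n) × EuclideanSpace ℝ (Fin n)),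
            IsProbabilityMeasure γ ∧ γ.map Prod.fst = μ ∧ γ.map Prod.snd = ν ∧
            c = ∫ p, ‖p.1 - p.2‖ ∂γ} := by
  -- basic constants
  set a : ℝ := Real.exp (-t) with ha_def
  set s : ℝ := 1 - Real.exp (-2 * t) with hs_def
  have ha : 0 < a := Real.exp_pos _
  have hs : 0 < s := by
    have h1 : Real.exp (-2 * t) < 1 := by
      rw [Real.exp_lt_one_iff]; nlinarith
    simp only [hs_def]; linarith
  set Cn : ℝ := (2 * π * s) ^ (-(n : ℝ) / 2) with hCn_def
  have hCn : 0 < Cn := Real.rpow_pos_of_pos (by positivity) _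
  set g : EuclideanSpace ℝ (Fin n) → EuclideanSpace ℝ (Fin n) → ℝ := fun z x => Cn * Real.exp (-‖z - a • x‖ ^ 2 / (2 * s)) with hg_def
  set c : EuclideanSpace ℝ (Fin n) → ℝ := fun z => (a / s) * (‖z‖ + a * M) with hc_def
  set A : EuclideanSpace ℝ (Fin n) → ℝ := fun z => Cn * Real.exp ((a * M / s) * ‖z‖ - ‖z‖ ^ 2 / (2 * s)) with hA_def
  set K : ℝ := Cn * (a / s) * (1 + a * M) * Real.exp (4 * M * (a / s) * (a * M)) with hK_def
  set c₀ : ℝ := a * M / s + 4 * M * (a / s) + 1 with hc₀_def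
  set Φ : EuclideanSpace ℝ (Fin n) → ℝ := fun z => K * Real.exp (c₀ * ‖z‖ - ‖z‖ ^ 2 / (2 * s)) with hΦ_def
  have hK0 : 0 < K := by positivity
  have hΦpos : ∀ z, 0 < Φ z := fun z => by positivity
  have hΦ_int : Integrable Φ := (gauss_int n (by positivity : (0:ℝ) < 2 * s) c₀).const_mul K
  have hA_int : Integrable A := (gauss_int n (by positivity : (0:ℝ) < 2 * s) (a * M / s)).const_mul Cn
  have hc_nonneg : ∀ z, 0 ≤ c z := fun z => by
    have := norm_nonneg z; positivity
  have hg_pos : ∀ z x, 0 < g z x := fun z x => by positivity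
  have hg_le : ∀ z x, g z x ≤ Cn := by
    intro z x
    have h1 : Real.exp (-‖z - a • x‖ ^ 2 / (2 * s)) ≤ 1 :=
      Real.exp_le_one_iff.2 (div_nonpos_of_nonpos_of_nonneg
        (neg_nonpos.2 (sq_nonneg _)) (by positivity))
    calc g z x = Cn * Real.exp (-‖z - a • x‖ ^ 2 / (2 * s)) := rfl
      _ ≤ Cn * 1 := mul_le_mul_of_nonneg_left h1 hCn.le
      _ = Cn := mul_one Cn
  have hgcont_x : ∀ z, Continuous fun x => g z x := fun z => by fun_prop
  have hgcont_z : ∀ x, Continuous fun z => g z x := fun x => by fun_prop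
  -- generic div monotonicity
  have hdiv : ∀ p q : ℝ, p ≤ q → p / (2 * s) ≤ q / (2 * s) := by
    intro p q h; gcongr
  have hnorm_smul : ∀ x : EuclideanSpace ℝ (Fin n), ‖a • x‖ = a * ‖x‖ := by
    intro x; rw [norm_smul, Real.norm_eq_abs, abs_of_pos ha]
  -- Key pointwise bound K1
  have hK1 : ∀ (z x y : EuclideanSpace ℝ (Fin n)), ‖x‖ ≤ M → ‖y‖ ≤ M →
      g z y ≤ g z x * Real.exp (c z * ‖x - y‖) := by
    intro z x y hx hy
    have hu : ‖z - a • x‖ ≤ ‖z‖ + a * M := by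
      refine (norm_sub_le _ _).trans ?_
      rw [hnorm_smul]; have := mul_le_mul_of_nonneg_left hx ha.le; linarith
    have hv : ‖z - a • y‖ ≤ ‖z‖ + a * M := by
      refine (norm_sub_le _ _).trans ?_
      rw [hnorm_smul]; have := mul_le_mul_of_nonneg_left hy ha.le; linarith
    have huv : ‖z - a • x‖ - ‖z - a • y‖ ≤ a * ‖x - y‖ := by
      have h1 : ‖z - a • x‖ - ‖z - a • y‖ ≤ ‖(z - a • x) - (z - a • y)‖ :=
        norm_sub_norm_le _ _
      have h2 : (z - a • x) - (z - a • y) = a • (y - x) := by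
        rw [smul_sub]; abel
      rw [h2, hnorm_smul] at h1
      have h4 : ‖y - x‖ = ‖x - y‖ := norm_sub_rev y x
      rw [h4] at h1
      exact h1
    have hu0 : 0 ≤ ‖z - a • x‖ := norm_nonneg _
    have hv0 : 0 ≤ ‖z - a • y‖ := norm_nonneg _
    have hD0 : 0 ≤ ‖x - y‖ := norm_nonneg _
    have hz0 : 0 ≤ ‖z‖ := norm_nonneg _
    have key : ‖z - a • x‖ ^ 2 - ‖z - a • y‖ ^ 2 ≤ 2 * a * (‖z‖ + a * M) * ‖x - y‖ := by
      rcases le_or_gt ‖z - a • y‖ ‖z - a • x‖ with h | h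
      · nlinarith
      · nlinarith [mul_nonneg (mul_nonneg (by positivity : (0:ℝ) ≤ 2 * a)
          (by nlinarith : (0:ℝ) ≤ ‖z‖ + a * M)) hD0]
    have hexp : -‖z - a • y‖ ^ 2 / (2 * s) ≤ -‖z - a • x‖ ^ 2 / (2 * s) + c z * ‖x - y‖ := by
      have h1 := hdiv _ _ key
      have h2 : (‖z - a • x‖ ^ 2 - ‖z - a • y‖ ^ 2) / (2 * s)
          = -‖z - a • y‖ ^ 2 / (2 * s) - (-‖z - a • x‖ ^ 2 / (2 * s)) := by ring
      have h3 : (2 * a * (‖z‖ + a * M) * ‖x - y‖) / (2 * s) = c z * ‖x - y‖ := by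
        simp only [hc_def]; field_simp
      rw [h2, h3] at h1; linarith
    calc g z y = Cn * Real.exp (-‖z - a • y‖ ^ 2 / (2 * s)) := rfl
      _ ≤ Cn * Real.exp (-‖z - a • x‖ ^ 2 / (2 * s) + c z * ‖x - y‖) := by
          exact mul_le_mul_of_nonneg_left (Real.exp_le_exp.2 hexp) hCn.le
      _ = g z x * Real.exp (c z * ‖x - y‖) := by
          simp only [hg_def]; rw [Real.exp_add]; ring
  -- Key pointwise bound K2 : uniform Gaussian upper bound
  have hK2 : ∀ (z x : EuclideanSpace ℝ (Fin n)), ‖x‖ ≤ M → g z x ≤ A z := by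
    intro z x hx
    have hinner : ‖z - a • x‖ ^ 2 = ‖z‖ ^ 2 - 2 * (inner ℝ z (a • x) : ℝ) + ‖a • x‖ ^ 2 :=
      norm_sub_sq_real z (a • x)
    have h1 : (inner ℝ z (a • x) : ℝ) ≤ ‖z‖ * (a * M) := by
      refine (real_inner_le_norm z (a • x)).trans ?_
      rw [hnorm_smul]
      have hz0 : (0:ℝ) ≤ ‖z‖ := norm_nonneg _
      have : a * ‖x‖ ≤ a * M := mul_le_mul_of_nonneg_left hx ha.le
      nlinarith
    have key : ‖z‖ ^ 2 - 2 * (a * M) * ‖z‖ ≤ ‖z - a • x‖ ^ 2 := by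
      nlinarith [sq_nonneg ‖a • x‖]
    have hexp : -‖z - a • x‖ ^ 2 / (2 * s) ≤ (a * M / s) * ‖z‖ - ‖z‖ ^ 2 / (2 * s) := by
      have h2 := hdiv _ _ key
      have h3 : (‖z‖ ^ 2 - 2 * (a * M) * ‖z‖) / (2 * s)
          = ‖z‖ ^ 2 / (2 * s) - (a * M / s) * ‖z‖ := by field_simp
      have h4 : -‖z - a • x‖ ^ 2 / (2 * s) = -(‖z - a • x‖ ^ 2 / (2 * s)) := by ring
      rw [h3] at h2; rw [h4]; linarith
    exact mul_le_mul_of_nonneg_left (Real.exp_le_exp.2 hexp) hCn.le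
  -- Key pointwise bound K3 : uniform lower bound
  have hK3 : ∀ (z x : EuclideanSpace ℝ (Fin n)), ‖x‖ ≤ M →
      Cn * Real.exp (-(‖z‖ + a * M) ^ 2 / (2 * s)) ≤ g z x := by
    intro z x hx
    have hu : ‖z - a • x‖ ≤ ‖z‖ + a * M := by
      refine (norm_sub_le _ _).trans ?_
      rw [hnorm_smul]; have := mul_le_mul_of_nonneg_left hx ha.le; linarith
    have key : ‖z - a • x‖ ^ 2 ≤ (‖z‖ + a * M) ^ 2 := by
      have := norm_nonneg (z - a • x); nlinarith
    refine mul_le_mul_of_nonneg_left (Real.exp_le_exp.2 ?_) hCn.le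
    have h5 := hdiv _ _ key
    have h6 : -‖z - a • x‖ ^ 2 / (2 * s) = -(‖z - a • x‖ ^ 2 / (2 * s)) := by ring
    have h7 : -(‖z‖ + a * M) ^ 2 / (2 * s) = -((‖z‖ + a * M) ^ 2 / (2 * s)) := by ring
    rw [h6, h7]; linarith
  -- core pointwise bound : A z * c z * exp(4 M c z) ≤ Φ z
  have hcore : ∀ z, A z * c z * Real.exp (4 * M * c z) ≤ Φ z := by
    intro z
    have hz0 : (0:ℝ) ≤ ‖z‖ := norm_nonneg z
    have he : 1 + ‖z‖ ≤ Real.exp ‖z‖ := by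
      have := Real.add_one_le_exp ‖z‖; linarith
    have h1 : c z ≤ (a / s) * ((1 + a * M) * Real.exp ‖z‖) := by
      simp only [hc_def]
      have h2 : ‖z‖ + a * M ≤ (1 + a * M) * Real.exp ‖z‖ := by
        nlinarith [mul_le_mul_of_nonneg_left he (by positivity : (0:ℝ) ≤ 1 + a * M),
          mul_nonneg (mul_nonneg ha.le hM.le) hz0]
      exact mul_le_mul_of_nonneg_left h2 (by positivity)
    have h3 : Real.exp (4 * M * c z) = Real.exp (4 * M * (a / s) * ‖z‖ + 4 * M * (a / s) * (a * M)) := by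
      simp only [hc_def]; congr 1; ring
    have hA0 : 0 < A z := by positivity
    calc A z * c z * Real.exp (4 * M * c z)
        ≤ A z * ((a / s) * ((1 + a * M) * Real.exp ‖z‖)) *
            Real.exp (4 * M * (a / s) * ‖z‖ + 4 * M * (a / s) * (a * M)) := by
          rw [← h3]
          exact mul_le_mul_of_nonneg_right
            (mul_le_mul_of_nonneg_left h1 hA0.le) (Real.exp_pos _).le
      _ = Φ z := by
          have merge : ∀ p q : ℝ, Real.exp p * Real.exp q = Real.exp (p + q) :=
            fun p q => (Real.exp_add p q).symm
          simp only [hA_def, hΦ_def, hK_def, hc₀_def]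
          calc Cn * Real.exp (a * M / s * ‖z‖ - ‖z‖ ^ 2 / (2 * s)) *
                ((a / s) * ((1 + a * M) * Real.exp ‖z‖)) *
                Real.exp (4 * M * (a / s) * ‖z‖ + 4 * M * (a / s) * (a * M))
              = (Cn * (a / s) * (1 + a * M)) *
                (Real.exp (a * M / s * ‖z‖ - ‖z‖ ^ 2 / (2 * s)) * Real.exp ‖z‖ *
                  Real.exp (4 * M * (a / s) * ‖z‖ + 4 * M * (a / s) * (a * M))) := by ring
            _ = (Cn * (a / s) * (1 + a * M)) *
                Real.exp ((a * M / s * ‖z‖ - ‖z‖ ^ 2 / (2 * s)) + ‖z‖ +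
                  (4 * M * (a / s) * ‖z‖ + 4 * M * (a / s) * (a * M))) := by
                rw [merge, merge]
            _ = (Cn * (a / s) * (1 + a * M)) *
                Real.exp ((4 * M * (a / s) * (a * M)) +
                  ((a * M / s + 4 * M * (a / s) + 1) * ‖z‖ - ‖z‖ ^ 2 / (2 * s))) := by
                rw [show (a * M / s * ‖z‖ - ‖z‖ ^ 2 / (2 * s)) + ‖z‖ +
                  (4 * M * (a / s) * ‖z‖ + 4 * M * (a / s) * (a * M))
                  = (4 * M * (a / s) * (a * M)) +
                    ((a * M / s + 4 * M * (a / s) + 1) * ‖z‖ - ‖z‖ ^ 2 / (2 * s)) from by ring]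
            _ = Cn * (a / s) * (1 + a * M) * Real.exp (4 * M * (a / s) * (a * M)) *
                Real.exp ((a * M / s + 4 * M * (a / s) + 1) * ‖z‖ - ‖z‖ ^ 2 / (2 * s)) := by
                rw [← merge]; ring
  -- continuity of densities
  have hDe : ∀ (κ : Measure (EuclideanSpace ℝ (Fin n))) z,
      ouDensity n t κ z = ∫ x, g z x ∂κ := fun κ z => rfl
  have hdens_cont : ∀ κ : Measure (EuclideanSpace ℝ (Fin n)), IsProbabilityMeasure κ →
      Continuous (fun z => ouDensity n t κ z) := by
    intro κ hκ
    haveI := hκ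
    have heq : (fun z => ouDensity n t κ z) = fun z => ∫ x, g z x ∂κ := by
      funext z; exact hDe κ z
    rw [heq]
    exact continuous_of_dominated (fun z => (hgcont_x z).aestronglyMeasurable)
      (fun z => Filter.Eventually.of_forall fun x => by
        rw [Real.norm_eq_abs, abs_of_pos (hg_pos z x)]; exact hg_le z x)
      (integrable_const Cn)
      (Filter.Eventually.of_forall fun x => hgcont_z x)
  have hball : ∀ κ : Measure (EuclideanSpace ℝ (Fin n)),
      κ (Metric.closedBall (0 : EuclideanSpace ℝ (Fin n)) M)ᶜ = 0 → ∀ᵐ x ∂κ, ‖x‖ ≤ M := by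
    intro κ h
    have h1 : ∀ᵐ x ∂κ, x ∈ Metric.closedBall (0 : EuclideanSpace ℝ (Fin n)) M :=
      mem_ae_iff.2 h
    filter_upwards [h1] with x hx using mem_closedBall_zero_iff.1 hx
  have hint_g : ∀ (κ : Measure (EuclideanSpace ℝ (Fin n))), IsProbabilityMeasure κ → ∀ z,
      Integrable (fun x => g z x) κ := by
    intro κ hκ z
    haveI := hκ
    refine (integrable_const Cn).mono' (hgcont_x z).aestronglyMeasurable ?_
    exact Filter.Eventually.of_forall fun x => by
      rw [Real.norm_eq_abs, abs_of_pos (hg_pos z x)]; exact hg_le z x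
  have hpos : ∀ κ : Measure (EuclideanSpace ℝ (Fin n)), IsProbabilityMeasure κ →
      κ (Metric.closedBall (0 : EuclideanSpace ℝ (Fin n)) M)ᶜ = 0 → ∀ z,
      0 < ouDensity n t κ z := by
    intro κ hκ hκs z
    haveI := hκ
    have h0 : 0 < Cn * Real.exp (-(‖z‖ + a * M) ^ 2 / (2 * s)) := by positivity
    have h1 : Cn * Real.exp (-(‖z‖ + a * M) ^ 2 / (2 * s))
        = ∫ _ : EuclideanSpace ℝ (Fin n), Cn * Real.exp (-(‖z‖ + a * M) ^ 2 / (2 * s)) ∂κ := by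
      rw [integral_const]; simp [measure_univ]
    have h2 : (∫ _ : EuclideanSpace ℝ (Fin n),
          Cn * Real.exp (-(‖z‖ + a * M) ^ 2 / (2 * s)) ∂κ) ≤ ∫ x, g z x ∂κ := by
      refine integral_mono_ae (integrable_const _) (hint_g κ hκ z) ?_
      filter_upwards [hball κ hκs] with x hx using hK3 z x hx
    rw [hDe κ z]; linarith
  have hleA : ∀ κ : Measure (EuclideanSpace ℝ (Fin n)), IsProbabilityMeasure κ →
      κ (Metric.closedBall (0 : EuclideanSpace ℝ (Fin n)) M)ᶜ = 0 → ∀ z,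
      ouDensity n t κ z ≤ A z := by
    intro κ hκ hκs z
    haveI := hκ
    have h1 : (∫ x, g z x ∂κ) ≤ ∫ _ : EuclideanSpace ℝ (Fin n), A z ∂κ := by
      refine integral_mono_ae (hint_g κ hκ z) (integrable_const _) ?_
      filter_upwards [hball κ hκs] with x hx using hK2 z x hx
    rw [hDe κ z]
    rw [integral_const] at h1; simpa [measure_univ] using h1
  -- the constant
  have hS0 : 0 ≤ ∫ z, Φ z := integral_nonneg fun z => (hΦpos z).le
  refine ⟨(∫ z, Φ z) + 1, by linarith, ?_⟩
  intro μ ν hμp hνp hμs hνs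
  haveI := hμp; haveI := hνp
  have hS : (0:ℝ) < (∫ z, Φ z) + 1 := by linarith
  have bullet1 : ∀ γ : Measure (EuclideanSpace ℝ (Fin n) × EuclideanSpace ℝ (Fin n)),
      IsProbabilityMeasure γ → γ.map Prod.fst = μ → γ.map Prod.snd = ν →
      ouKL n t ν μ ≤ ((∫ z, Φ z) + 1) * ∫ p, ‖p.1 - p.2‖ ∂γ := by
    intro γ hγp hγ1 hγ2
    haveI := hγp
    set I := ∫ p : EuclideanSpace ℝ (Fin n) × EuclideanSpace ℝ (Fin n), ‖p.1 - p.2‖ ∂γ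
      with hI_def
    have hI0 : 0 ≤ I := integral_nonneg fun p => norm_nonneg _
    have hγball : ∀ᵐ p ∂γ, ‖p.1‖ ≤ M ∧ ‖p.2‖ ≤ M := by
      have h1 : γ (Prod.fst ⁻¹' (Metric.closedBall (0 : EuclideanSpace ℝ (Fin n)) M)ᶜ) = 0 := by
        rw [← Measure.map_apply measurable_fst measurableSet_closedBall.compl, hγ1]
        exact hμs
      have h2 : γ (Prod.snd ⁻¹' (Metric.closedBall (0 : EuclideanSpace ℝ (Fin n)) M)ᶜ) = 0 := by
        rw [← Measure.map_apply measurable_snd measurableSet_closedBall.compl, hγ2]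
        exact hνs
      have h3 : ∀ᵐ p : EuclideanSpace ℝ (Fin n) × EuclideanSpace ℝ (Fin n) ∂γ,
          p.1 ∈ Metric.closedBall (0 : EuclideanSpace ℝ (Fin n)) M := mem_ae_iff.2 h1
      have h4 : ∀ᵐ p : EuclideanSpace ℝ (Fin n) × EuclideanSpace ℝ (Fin n) ∂γ,
          p.2 ∈ Metric.closedBall (0 : EuclideanSpace ℝ (Fin n)) M := mem_ae_iff.2 h2
      filter_upwards [h3, h4] with p hp3 hp4
      exact ⟨mem_closedBall_zero_iff.1 hp3, mem_closedBall_zero_iff.1 hp4⟩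
    have hρ_map : ∀ z, ouDensity n t ν z = ∫ p, g z p.2 ∂γ := by
      intro z
      rw [hDe ν z, ← hγ2]
      exact integral_map measurable_snd.aemeasurable (hgcont_x z).aestronglyMeasurable
    have hσ_map : ∀ z, ouDensity n t μ z = ∫ p, g z p.1 ∂γ := by
      intro z
      rw [hDe μ z, ← hγ1]
      exact integral_map measurable_fst.aemeasurable (hgcont_x z).aestronglyMeasurable
    have hint_gp1 : ∀ z, Integrable (fun p :
        EuclideanSpace ℝ (Fin n) × EuclideanSpace ℝ (Fin n) => g z p.1) γ := by
      intro z
      refine (integrable_const Cn).mono'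
        (((hgcont_x z).comp continuous_fst).aestronglyMeasurable) ?_
      exact Filter.Eventually.of_forall fun p => by
        rw [Real.norm_eq_abs, abs_of_pos (hg_pos z p.1)]; exact hg_le z p.1
    have hint_gp2 : ∀ z, Integrable (fun p :
        EuclideanSpace ℝ (Fin n) × EuclideanSpace ℝ (Fin n) => g z p.2) γ := by
      intro z
      refine (integrable_const Cn).mono'
        (((hgcont_x z).comp continuous_snd).aestronglyMeasurable) ?_
      exact Filter.Eventually.of_forall fun p => by
        rw [Real.norm_eq_abs, abs_of_pos (hg_pos z p.2)]; exact hg_le z p.2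
    have hint_D : Integrable (fun p :
        EuclideanSpace ℝ (Fin n) × EuclideanSpace ℝ (Fin n) => ‖p.1 - p.2‖) γ := by
      refine (integrable_const (2 * M)).mono'
        ((continuous_fst.sub continuous_snd).norm.aestronglyMeasurable) ?_
      filter_upwards [hγball] with p hp
      rw [Real.norm_eq_abs, abs_of_nonneg (norm_nonneg _)]
      calc ‖p.1 - p.2‖ ≤ ‖p.1‖ + ‖p.2‖ := norm_sub_le _ _
        _ ≤ 2 * M := by linarith [hp.1, hp.2]
    have hρσ2 : ∀ z, ouDensity n t ν z ≤ Real.exp (2 * M * c z) * ouDensity n t μ z := by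
      intro z
      rw [hρ_map z, hσ_map z, ← integral_const_mul]
      refine integral_mono_ae (hint_gp2 z) ((hint_gp1 z).const_mul _) ?_
      filter_upwards [hγball] with p hp
      have hd2M : ‖p.1 - p.2‖ ≤ 2 * M := by
        calc ‖p.1 - p.2‖ ≤ ‖p.1‖ + ‖p.2‖ := norm_sub_le _ _
          _ ≤ 2 * M := by linarith [hp.1, hp.2]
      calc g z p.2 ≤ g z p.1 * Real.exp (c z * ‖p.1 - p.2‖) := hK1 z p.1 p.2 hp.1 hp.2
        _ ≤ Real.exp (2 * M * c z) * g z p.1 := by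
            have h4 : c z * ‖p.1 - p.2‖ ≤ 2 * M * c z := by
              have := hc_nonneg z; nlinarith
            have h5 := Real.exp_le_exp.2 h4
            nlinarith [hg_pos z p.1, Real.exp_pos (c z * ‖p.1 - p.2‖)]
    have hρσ1 : ∀ z, ouDensity n t ν z
        ≤ ouDensity n t μ z + A z * c z * Real.exp (2 * M * c z) * I := by
      intro z
      rw [hρ_map z, hσ_map z]
      have hrhs : (∫ p, g z p.1 ∂γ) + A z * c z * Real.exp (2 * M * c z) * I
          = ∫ p : EuclideanSpace ℝ (Fin n) × EuclideanSpace ℝ (Fin n),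
              (g z p.1 + A z * c z * Real.exp (2 * M * c z) * ‖p.1 - p.2‖) ∂γ := by
        rw [integral_add (hint_gp1 z) (hint_D.const_mul _), integral_const_mul, integral_const_mul, hI_def]
      rw [hrhs]
      refine integral_mono_ae (hint_gp2 z) ((hint_gp1 z).add (hint_D.const_mul _)) ?_
      filter_upwards [hγball] with p hp
      have hd2M : ‖p.1 - p.2‖ ≤ 2 * M := by
        calc ‖p.1 - p.2‖ ≤ ‖p.1‖ + ‖p.2‖ := norm_sub_le _ _
          _ ≤ 2 * M := by linarith [hp.1, hp.2]
      have h4 := hK1 z p.1 p.2 hp.1 hp.2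
      have h5 : Real.exp (c z * ‖p.1 - p.2‖)
          ≤ 1 + (c z * ‖p.1 - p.2‖) * Real.exp (2 * M * c z) :=
        exp_le_one_add_mul_exp (mul_nonneg (hc_nonneg z) (norm_nonneg _))
          (by have := hc_nonneg z; nlinarith)
      have h6 := hK2 z p.1 hp.1
      calc g z p.2 ≤ g z p.1 * (1 + (c z * ‖p.1 - p.2‖) * Real.exp (2 * M * c z)) :=
            le_trans h4 (mul_le_mul_of_nonneg_left h5 (hg_pos z p.1).le)
        _ = g z p.1 + g z p.1 * c z * Real.exp (2 * M * c z) * ‖p.1 - p.2‖ := by ring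
        _ ≤ g z p.1 + A z * c z * Real.exp (2 * M * c z) * ‖p.1 - p.2‖ := by
            have hnn : 0 ≤ c z * Real.exp (2 * M * c z) * ‖p.1 - p.2‖ := by
              have := hc_nonneg z; positivity
            nlinarith [h6]
    have h_main : ∀ z, ouDensity n t ν z *
        Real.log (ouDensity n t ν z / ouDensity n t μ z) ≤ Φ z * I := by
      intro z
      have hρ := hpos ν hνp hνs z
      have hσ := hpos μ hμp hμs z
      rcases le_or_gt (ouDensity n t ν z) (ouDensity n t μ z) with h | h
      · have hlog : Real.log (ouDensity n t ν z / ouDensity n t μ z) ≤ 0 :=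
          Real.log_nonpos (by positivity) ((div_le_one hσ).2 h)
        have h1 : ouDensity n t ν z * Real.log (ouDensity n t ν z / ouDensity n t μ z) ≤ 0 :=
          mul_nonpos_iff.mpr (Or.inl ⟨hρ.le, hlog⟩)
        have h2 : 0 ≤ Φ z * I := mul_nonneg (hΦpos z).le hI0
        linarith
      · have hlog := Real.log_le_sub_one_of_pos (div_pos hρ hσ)
        have h1 : ouDensity n t ν z * Real.log (ouDensity n t ν z / ouDensity n t μ z)
            ≤ ouDensity n t ν z * (ouDensity n t ν z / ouDensity n t μ z - 1) :=
          mul_le_mul_of_nonneg_left hlog hρ.le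
        have h2 : ouDensity n t ν z * (ouDensity n t ν z / ouDensity n t μ z - 1)
            = (ouDensity n t ν z / ouDensity n t μ z) *
              (ouDensity n t ν z - ouDensity n t μ z) := by
          field_simp
        have h3 : ouDensity n t ν z / ouDensity n t μ z ≤ Real.exp (2 * M * c z) :=
          (div_le_iff₀ hσ).2 (by linarith [hρσ2 z])
        have h4 : ouDensity n t ν z - ouDensity n t μ z
            ≤ A z * c z * Real.exp (2 * M * c z) * I := by linarith [hρσ1 z]
        have h5 : (ouDensity n t ν z / ouDensity n t μ z) *
              (ouDensity n t ν z - ouDensity n t μ z)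
            ≤ Real.exp (2 * M * c z) * (A z * c z * Real.exp (2 * M * c z) * I) :=
          mul_le_mul h3 h4 (by linarith) (Real.exp_pos _).le
        have h6 : Real.exp (2 * M * c z) * (A z * c z * Real.exp (2 * M * c z) * I)
            = (A z * c z * Real.exp (4 * M * c z)) * I := by
          rw [show (4:ℝ) * M * c z = 2 * M * c z + 2 * M * c z from by ring, Real.exp_add]
          ring
        have h7 := mul_le_mul_of_nonneg_right (hcore z) hI0
        linarith [h1, h2 ▸ h1]
    have h_low : ∀ z, -(A z) ≤ ouDensity n t ν z *
        Real.log (ouDensity n t ν z / ouDensity n t μ z) := by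
      intro z
      have hρ := hpos ν hνp hνs z
      have hσ := hpos μ hμp hμs z
      have hσA := hleA μ hμp hμs z
      have hl1 : Real.log (ouDensity n t μ z / ouDensity n t ν z)
          ≤ ouDensity n t μ z / ouDensity n t ν z - 1 :=
        Real.log_le_sub_one_of_pos (div_pos hσ hρ)
      have hl2 : Real.log (ouDensity n t ν z / ouDensity n t μ z)
          = - Real.log (ouDensity n t μ z / ouDensity n t ν z) := by
        rw [← Real.log_inv, inv_div]
      have hl3 : ouDensity n t ν z * (ouDensity n t μ z / ouDensity n t ν z - 1)
          = ouDensity n t μ z - ouDensity n t ν z := by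
        field_simp
      have hl4 : ouDensity n t ν z * Real.log (ouDensity n t μ z / ouDensity n t ν z)
          ≤ ouDensity n t μ z - ouDensity n t ν z := by
        calc ouDensity n t ν z * Real.log (ouDensity n t μ z / ouDensity n t ν z)
            ≤ ouDensity n t ν z * (ouDensity n t μ z / ouDensity n t ν z - 1) :=
              mul_le_mul_of_nonneg_left hl1 hρ.le
          _ = ouDensity n t μ z - ouDensity n t ν z := hl3
      have hl5 : ouDensity n t ν z * Real.log (ouDensity n t ν z / ouDensity n t μ z)
          = -(ouDensity n t ν z * Real.log (ouDensity n t μ z / ouDensity n t ν z)) := by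
        rw [hl2]; ring
      rw [hl5]
      have : -(A z) ≤ -(ouDensity n t μ z - ouDensity n t ν z) := by linarith
      linarith
    have hf_meas : AEStronglyMeasurable (fun z => ouDensity n t ν z *
        Real.log (ouDensity n t ν z / ouDensity n t μ z))
        (volume : Measure (EuclideanSpace ℝ (Fin n))) := by
      have hc1 := (hdens_cont ν hνp).measurable
      have hc2 := (hdens_cont μ hμp).measurable
      exact (hc1.mul ((hc1.div hc2).log)).aestronglyMeasurable
    have hbound_int : Integrable (fun z : EuclideanSpace ℝ (Fin n) => Φ z * I + A z) :=
      (hΦ_int.mul_const I).add hA_int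
    have hf_int : Integrable (fun z : EuclideanSpace ℝ (Fin n) => ouDensity n t ν z *
        Real.log (ouDensity n t ν z / ouDensity n t μ z)) := by
      refine hbound_int.mono' hf_meas ?_
      refine Filter.Eventually.of_forall fun z => ?_
      rw [Real.norm_eq_abs, abs_le]
      have hΦI : 0 ≤ Φ z * I := mul_nonneg (hΦpos z).le hI0
      have hA0 : 0 < A z := by positivity
      exact ⟨by linarith [h_low z], by linarith [h_main z]⟩
    have hKL_eq : ouKL n t ν μ = ∫ z, ouDensity n t ν z *
        Real.log (ouDensity n t ν z / ouDensity n t μ z) := rfl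
    calc ouKL n t ν μ = ∫ z, ouDensity n t ν z *
          Real.log (ouDensity n t ν z / ouDensity n t μ z) := hKL_eq
      _ ≤ ∫ z, Φ z * I := integral_mono hf_int (hΦ_int.mul_const I) h_main
      _ = (∫ z, Φ z) * I := integral_mul_const I Φ
      _ ≤ ((∫ z, Φ z) + 1) * I := by nlinarith
  refine ⟨bullet1, ?_⟩
  have hprod : IsProbabilityMeasure (μ.prod ν) := by infer_instance
  have hfst : (μ.prod ν).map Prod.fst = μ := by
    rw [Measure.map_fst_prod]; simp [measure_univ]
  have hsnd : (μ.prod ν).map Prod.snd = ν := by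
    rw [Measure.map_snd_prod]; simp [measure_univ]
  have hne : Set.Nonempty {c : ℝ |
      ∃ γ : Measure (EuclideanSpace ℝ (Fin n) × EuclideanSpace ℝ (Fin n)),
        IsProbabilityMeasure γ ∧ γ.map Prod.fst = μ ∧ γ.map Prod.snd = ν ∧
        c = ∫ p, ‖p.1 - p.2‖ ∂γ} :=
    ⟨∫ p, ‖p.1 - p.2‖ ∂(μ.prod ν), ⟨μ.prod ν, hprod, hfst, hsnd, rfl⟩⟩
  have hall : ∀ b ∈ {c : ℝ |
      ∃ γ : Measure (EuclideanSpace ℝ (Fin n) × EuclideanSpace ℝ (Fin n)),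
        IsProbabilityMeasure γ ∧ γ.map Prod.fst = μ ∧ γ.map Prod.snd = ν ∧
        c = ∫ p, ‖p.1 - p.2‖ ∂γ}, ouKL n t ν μ / ((∫ z, Φ z) + 1) ≤ b := by
    rintro b ⟨γ, h1, h2, h3, h4⟩
    rw [div_le_iff₀ hS, h4]
    calc ouKL n t ν μ ≤ ((∫ z, Φ z) + 1) * ∫ p, ‖p.1 - p.2‖ ∂γ := bullet1 γ h1 h2 h3
      _ = (∫ p, ‖p.1 - p.2‖ ∂γ) * ((∫ z, Φ z) + 1) := mul_comm _ _
  have hinf := le_csInf hne hall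
  rw [div_le_iff₀' hS] at hinf
  exact hinf
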